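/- Let $u>v>0$. With $\varphi$ and $z_+$ as in the $_1F_1$ phase function, for $\zeta>0$ one has $\frac{\mathrm{d}^2\varphi}{\mathrm{d}\zeta^2}=\frac{(u+z_+)^2(u-v)}{(v+z_+)^2(uv+2uz_++z_+^2)}>0$; hence $\varphi$ is strictly convex on $(0,\infty)$. -/

import Mathlib

theorem stmt_14 (u v : ℝ) (huv : u > v) (hv : v > 0)
    (zp φz : ℝ → ℝ)
    (hzp : ∀ s, zp s = (s - v + Real.sqrt ((s - v) ^ 2 + 4 * u * s)) / 2)
    (hφz : ∀ z, φz z = (u - v) * Real.log (u - v) + v * Real.log (z + v)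
        - u * Real.log (z + u) - z) :
    (∀ ζ > (0 : ℝ),
      deriv (deriv (fun s => φz (zp s))) ζ
        = (u + zp ζ) ^ 2 * (u - v)
            / ((v + zp ζ) ^ 2 * (u * v + 2 * u * zp ζ + (zp ζ) ^ 2)) ∧
      deriv (deriv (fun s => φz (zp s))) ζ > 0) ∧
    StrictConvexOn ℝ (Set.Ioi 0) (fun ζ => φz (zp ζ)) := by
  have hu : (0:ℝ) < u := hv.trans huv
  have huv' : (0:ℝ) < u - v := sub_pos.mpr huv
  set f : ℝ → ℝ := fun s => φz (zp s) with hfdef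
  have hD : ∀ ζ > (0:ℝ), 0 < (ζ - v) ^ 2 + 4 * u * ζ := by
    intro ζ hζ; positivity
  have hwpos : ∀ ζ > (0:ℝ), 0 < Real.sqrt ((ζ - v) ^ 2 + 4 * u * ζ) := by
    intro ζ hζ; exact Real.sqrt_pos.mpr (hD ζ hζ)
  have hwsq : ∀ ζ > (0:ℝ),
      Real.sqrt ((ζ - v) ^ 2 + 4 * u * ζ) ^ 2 = (ζ - v) ^ 2 + 4 * u * ζ := by
    intro ζ hζ; exact Real.sq_sqrt (hD ζ hζ).le
  have hweq : ∀ ζ > (0:ℝ),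
      Real.sqrt ((ζ - v) ^ 2 + 4 * u * ζ) = 2 * zp ζ - (ζ - v) := by
    intro ζ hζ; rw [hzp]; ring
  have hzpos : ∀ ζ > (0:ℝ), 0 < zp ζ := by
    intro ζ hζ
    have habs : |ζ - v| < Real.sqrt ((ζ - v) ^ 2 + 4 * u * ζ) := by
      rw [← Real.sqrt_sq_eq_abs]
      exact Real.sqrt_lt_sqrt (sq_nonneg _) (by nlinarith)
    have h2 := neg_abs_le (ζ - v)
    rw [hzp]; linarith
  have hquad : ∀ ζ > (0:ℝ),
      (zp ζ) ^ 2 + v * zp ζ - ζ * zp ζ - u * ζ = 0 := by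
    intro ζ hζ
    have h1 := hwsq ζ hζ
    rw [hweq ζ hζ] at h1
    linear_combination h1 / 4
  have hwid : ∀ ζ > (0:ℝ),
      Real.sqrt ((ζ - v) ^ 2 + 4 * u * ζ) * (zp ζ + u)
        = (zp ζ) ^ 2 + 2 * u * zp ζ + u * v := by
    intro ζ hζ
    rw [hweq ζ hζ]
    linear_combination hquad ζ hζ
  -- derivative of zp
  have hzp' : ∀ ζ > (0:ℝ),
      HasDerivAt zp ((u + zp ζ) / Real.sqrt ((ζ - v) ^ 2 + 4 * u * ζ)) ζ := by
    intro ζ hζ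
    have hq : HasDerivAt (fun s : ℝ => (s - v) ^ 2 + 4 * u * s)
        (2 * (ζ - v) + 4 * u) ζ := by
      have h1 : HasDerivAt (fun s : ℝ => (s - v) ^ 2) (2 * (ζ - v)) ζ := by
        simpa using ((hasDerivAt_id ζ).sub_const v).fun_pow 2
      have h2 : HasDerivAt (fun s : ℝ => 4 * u * s) (4 * u) ζ := by
        simpa using (hasDerivAt_id ζ).const_mul (4 * u)
      simpa using h1.fun_add h2
    have hs : HasDerivAt (fun s : ℝ => Real.sqrt ((s - v) ^ 2 + 4 * u * s))
        (1 / (2 * Real.sqrt ((ζ - v) ^ 2 + 4 * u * ζ)) * (2 * (ζ - v) + 4 * u)) ζ :=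
      (Real.hasDerivAt_sqrt (hD ζ hζ).ne').comp ζ hq
    have h3 : HasDerivAt (fun s : ℝ => (s - v + Real.sqrt ((s - v) ^ 2 + 4 * u * s)) / 2)
        ((1 + 1 / (2 * Real.sqrt ((ζ - v) ^ 2 + 4 * u * ζ)) * (2 * (ζ - v) + 4 * u)) / 2) ζ :=
      (((hasDerivAt_id ζ).sub_const v).add hs).div_const 2
    have h4 : HasDerivAt zp
        ((1 + 1 / (2 * Real.sqrt ((ζ - v) ^ 2 + 4 * u * ζ)) * (2 * (ζ - v) + 4 * u)) / 2) ζ :=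
      h3.congr_of_eventuallyEq (Filter.Eventually.of_forall fun s => hzp s)
    have hw := hwpos ζ hζ
    have hval : (1 + 1 / (2 * Real.sqrt ((ζ - v) ^ 2 + 4 * u * ζ)) * (2 * (ζ - v) + 4 * u)) / 2
        = (u + zp ζ) / Real.sqrt ((ζ - v) ^ 2 + 4 * u * ζ) := by
      rw [hweq ζ hζ] at hw ⊢
      field_simp
      ring
    exact hval ▸ h4
  -- derivative of φz
  have hφ' : ∀ z > (0:ℝ), HasDerivAt φz (v / (z + v) - u / (z + u) - 1) z := by
    intro z hz
    have hzv : z + v ≠ 0 := by positivity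
    have hzu : z + u ≠ 0 := by positivity
    have h1 : HasDerivAt (fun z : ℝ => Real.log (z + v)) ((z + v)⁻¹) z := by
      simpa [Function.comp_def] using (Real.hasDerivAt_log hzv).comp z ((hasDerivAt_id z).add_const v)
    have h2 : HasDerivAt (fun z : ℝ => Real.log (z + u)) ((z + u)⁻¹) z := by
      simpa [Function.comp_def] using (Real.hasDerivAt_log hzu).comp z ((hasDerivAt_id z).add_const u)
    have h3 := (((hasDerivAt_const z ((u - v) * Real.log (u - v))).add
      (h1.const_mul v)).sub (h2.const_mul u)).sub (hasDerivAt_id z)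
    have hfun : φz = fun z : ℝ => (u - v) * Real.log (u - v) + v * Real.log (z + v)
        - u * Real.log (z + u) - z := funext hφz
    rw [hfun]
    refine HasDerivAt.congr_deriv h3 (Eq.symm ?_)
    field_simp
    ring
  -- first derivative of f
  have hf' : ∀ ζ > (0:ℝ), HasDerivAt f (-(u + zp ζ) / (v + zp ζ)) ζ := by
    intro ζ hζ
    have hz := hzpos ζ hζ
    have hcomp := (hφ' (zp ζ) hz).comp ζ (hzp' ζ hζ)
    refine HasDerivAt.congr_deriv hcomp (Eq.symm ?_)
    have hw := hwpos ζ hζ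
    have hid := hwid ζ hζ
    have hzv : (0:ℝ) < zp ζ + v := by linarith
    have hzu : (0:ℝ) < zp ζ + u := by linarith
    have hvz : (0:ℝ) < v + zp ζ := by linarith
    generalize Real.sqrt ((ζ - v) ^ 2 + 4 * u * ζ) = w at hw hid ⊢
    field_simp
    linear_combination (-(zp ζ + v)) * hid
  -- second derivative
  have hg' : ∀ ζ > (0:ℝ), HasDerivAt (fun s => -(u + zp s) / (v + zp s))
      ((u + zp ζ) ^ 2 * (u - v)
        / ((v + zp ζ) ^ 2 * (u * v + 2 * u * zp ζ + (zp ζ) ^ 2))) ζ := by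
    intro ζ hζ
    have hz := hzpos ζ hζ
    have hw := hwpos ζ hζ
    have hid := hwid ζ hζ
    have hvz : (0:ℝ) < v + zp ζ := by linarith
    have hnum : HasDerivAt (fun s => -(u + zp s))
        (-((u + zp ζ) / Real.sqrt ((ζ - v) ^ 2 + 4 * u * ζ))) ζ :=
      ((hzp' ζ hζ).const_add u).neg
    have hden : HasDerivAt (fun s => v + zp s)
        ((u + zp ζ) / Real.sqrt ((ζ - v) ^ 2 + 4 * u * ζ)) ζ :=
      (hzp' ζ hζ).const_add v
    have hdiv := hnum.div hden hvz.ne'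
    refine HasDerivAt.congr_deriv hdiv (Eq.symm ?_)
    have hpos : (0:ℝ) < u * v + 2 * u * zp ζ + (zp ζ) ^ 2 := by positivity
    generalize Real.sqrt ((ζ - v) ^ 2 + 4 * u * ζ) = w at hw hid ⊢
    field_simp
    linear_combination (u - v) * hid
  have hderiv_f : ∀ ζ ∈ Set.Ioi (0:ℝ), deriv f ζ = -(u + zp ζ) / (v + zp ζ) :=
    fun ζ hζ => (hf' ζ hζ).deriv
  have hderiv2 : ∀ ζ > (0:ℝ), HasDerivAt (deriv f)
      ((u + zp ζ) ^ 2 * (u - v)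
        / ((v + zp ζ) ^ 2 * (u * v + 2 * u * zp ζ + (zp ζ) ^ 2))) ζ := by
    intro ζ hζ
    have heq : deriv f =ᶠ[nhds ζ] fun s => -(u + zp s) / (v + zp s) := by
      filter_upwards [Ioi_mem_nhds hζ] with s hs using hderiv_f s hs
    exact (hg' ζ hζ).congr_of_eventuallyEq heq
  have hpos2 : ∀ ζ > (0:ℝ), 0 < (u + zp ζ) ^ 2 * (u - v)
      / ((v + zp ζ) ^ 2 * (u * v + 2 * u * zp ζ + (zp ζ) ^ 2)) := by
    intro ζ hζ
    have hz := hzpos ζ hζ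
    apply div_pos
    · exact mul_pos (pow_pos (by linarith) 2) huv'
    · exact mul_pos (pow_pos (by linarith) 2)
        (by nlinarith [mul_pos hu hv, mul_pos hu hz, sq_nonneg (zp ζ)])
  constructor
  · intro ζ hζ
    have h := (hderiv2 ζ hζ).deriv
    exact ⟨h, h ▸ hpos2 ζ hζ⟩
  · apply strictConvexOn_of_deriv2_pos (convex_Ioi 0)
    · intro ζ hζ
      exact (hf' ζ hζ).continuousAt.continuousWithinAt
    · intro ζ hζ
      rw [interior_Ioi] at hζ
      have h := (hderiv2 ζ hζ).deriv
      simp only [Function.iterate_succ, Function.iterate_zero, Function.comp, id]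
      rw [h]
      exact hpos2 ζ hζ
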